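/- Let s be a prime power, q = s², and let F'(X₀,X₁,X₂) = X₀^s X₂ + X₂^s X₁ + X₁^s X₀ - 3(X₀X₁X₂)^{(s+1)/3} with 3 ∣ s+1. If ε is a primitive cube root of unity in the algebraic closure of F_q and G(X₀,X₁,X₂) = X₀^s X₂ + X₂^s X₁ + X₁^s X₀, then F'(X₀³, X₁³, X₂³) = G(X₀,X₁,X₂) · G(εX₀, εX₁, X₂) · G(X₀, X₁, εX₂). -/
import Mathlib


open MvPolynomial

/-- G(x,y,z) = x^s z + z^s y + y^s x. -/
def hermG {R : Type*} [CommRing R] (s : ℕ) (x y z : R) : R :=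
  x ^ s * z + z ^ s * y + y ^ s * x

/-- with s ≡ 2 (mod 3) a power of p ≠ 3, ε a primitive cube root
of unity, and F'(X₀,X₁,X₂) = G(X₀,X₁,X₂) - 3(X₀X₁X₂)^{(s+1)/3}, one has
F'(X₀³,X₁³,X₂³) = G(X₀,X₁,X₂)·G(εX₀,εX₁,X₂)·G(X₀,X₁,εX₂). -/
theorem stmt17 {K : Type*} [Field K] [IsAlgClosed K] (p n s : ℕ)
    (hp : p.Prime) [CharP K p] (hs : s = p ^ n) (hn : 0 < n)
    (h3 : s % 3 = 2) (hp3 : p ≠ 3) (ε : K) (hε : ε ^ 2 + ε + 1 = 0) :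
    hermG s ((X 0 : MvPolynomial (Fin 3) K) ^ 3) (X 1 ^ 3) (X 2 ^ 3)
        - 3 * ((X 0 : MvPolynomial (Fin 3) K) ^ 3 * X 1 ^ 3 * X 2 ^ 3) ^ ((s + 1) / 3)
      = hermG s (X 0 : MvPolynomial (Fin 3) K) (X 1) (X 2)
        * hermG s (C ε * X 0) (C ε * X 1) (X 2)
        * hermG s (X 0) (X 1) (C ε * X 2) := by
  obtain ⟨k, rfl⟩ : ∃ k, s = 3 * k + 2 := ⟨s / 3, by omega⟩
  have hC : (C ε : MvPolynomial (Fin 3) K) ^ 2 + C ε + 1 = 0 := by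
    simpa using congrArg (MvPolynomial.C (σ := Fin 3)) hε
  have hε3 : (C ε : MvPolynomial (Fin 3) K) ^ 3 = 1 := by
    linear_combination (C ε - 1) * hC
  have hse : (C ε : MvPolynomial (Fin 3) K) ^ (3 * k + 2) = C ε ^ 2 := by
    rw [pow_add, pow_mul, hε3, one_pow, one_mul]
  have hdiv : (3 * k + 2 + 1) / 3 = k + 1 := by omega
  simp only [hermG, hdiv, mul_pow, hse]
  linear_combination (X 1 ^ 3 * X 2 ^ 6 * (X 2 ^ k) ^ 9 - 1 * X 1 ^ 3 * X 2 ^ 6 * (X 2 ^ k) ^ 9 * C ε - 1 * X 0 * X 1 ^ 4 * X 2 ^ 4 * (X 1 ^ k) ^ 3 * (X 2 ^ k) ^ 6 * C ε + X 0 * X 1 ^ 4 * X 2 ^ 4 * (X 1 ^ k) ^ 3 * (X 2 ^ k) ^ 6 * C ε ^ 2 - 1 * X 0 * X 1 ^ 4 * X 2 ^ 4 * (X 1 ^ k) ^ 3 * (X 2 ^ k) ^ 6 * C ε ^ 3 - 1 * X 0 ^ 2 * X 1 ^ 2 * X 2 ^ 5 * (X 0 ^ k) ^ 3 * (X 2 ^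 k) ^ 6 * C ε ^ 2 - 1 * X 0 ^ 2 * X 1 ^ 5 * X 2 ^ 2 * (X 1 ^ k) ^ 6 * (X 2 ^ k) ^ 3 * C ε + X 0 ^ 2 * X 1 ^ 5 * X 2 ^ 2 * (X 1 ^ k) ^ 6 * (X 2 ^ k) ^ 3 * C ε ^ 2 - 1 * X 0 ^ 2 * X 1 ^ 5 * X 2 ^ 2 * (X 1 ^ k) ^ 6 * (X 2 ^ k) ^ 3 * C ε ^ 3 - 3 * X 0 ^ 3 * X 1 ^ 3 * X 2 ^ 3 * (X 0 ^ k) ^ 3 * (X 1 ^ k) ^ 3 * (X 2 ^ k) ^ 3 + 2 * X 0 ^ 3 * X 1 ^ 3 * X 2 ^ 3 * (X 0 ^ k) ^ 3 * (X 1 ^ k) ^ 3 * (X 2 ^ k) ^ 3 * C ε - 1 * X 0 ^ 3 * X 1 ^ 3 * X 2 ^ 3 * (X 0 ^ k) ^ 3 * (X 1 ^ k) ^ 3 * (X 2 ^ k) ^ 3 * C ε ^ 2 - 1 * X 0 ^ 3 * X 1 ^ 3 * X 2 ^ 3 * (X 0 ^ k) ^ 3 * (X 1 ^ k) ^ 3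 * (X 2 ^ k) ^ 3 * C ε ^ 3 + X 0 ^ 3 * X 1 ^ 6 * (X 1 ^ k) ^ 9 - 1 * X 0 ^ 3 * X 1 ^ 6 * (X 1 ^ k) ^ 9 * C ε - 1 * X 0 ^ 4 * X 1 * X 2 ^ 4 * (X 0 ^ k) ^ 6 * (X 2 ^ k) ^ 3 * C ε ^ 2 - 1 * X 0 ^ 4 * X 1 ^ 4 * X 2 * (X 0 ^ k) ^ 3 * (X 1 ^ k) ^ 6 * C ε ^ 2 - 1 * X 0 ^ 5 * X 1 ^ 2 * X 2 ^ 2 * (X 0 ^ k) ^ 6 * (X 1 ^ k) ^ 3 * C ε ^ 2 + X 0 ^ 6 * X 2 ^ 3 * (X 0 ^ k) ^ 9 - 1 * X 0 ^ 6 * X 2 ^ 3 * (X 0 ^ k) ^ 9 * C ε) * hC
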